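/- There exist connected graphs H₁ and H₂ (self-loops allowed) with the same number of vertices and the same number of edges such that: H₁ is not isomorphic to H₂; the disjoint union H₁ ⊔ H₂ is composite with respect to the direct product (indeed it is isomorphic to F ⊗ B for some 2-vertex graph F not isomorphic to D₂ and some graph B); and there is no graph B' with H₁ ⊔ H₂ ≅ D₂ ⊗ B'. -/

import Mathlib

open Kronecker

/-- Graph isomorphism between adjacency relations. -/
def IsIso {V₁ : Type*} {V₂ : Type*} (A₁ : V₁ → V₁ → Prop) (A₂ : V₂ → V₂ → Prop) : Prop :=
  ∃ e : V₁ ≃ V₂, ∀ u v, A₁ u v ↔ A₂ (e u) (e v)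

/-- Connectedness: the reflexive-transitive closure relates every pair of vertices. -/
def Conn {V : Type*} (A : V → V → Prop) : Prop :=
  ∀ u v : V, Relation.ReflTransGen A u v

/-- Bipartiteness via a 2-coloring. -/
def Bipartite {V : Type*} (A : V → V → Prop) : Prop :=
  ∃ c : V → Bool, ∀ u v, A u v → c u ≠ c v

/-- Direct (Kronecker/tensor/cardinal) product of graphs. -/
def DProd {V₁ : Type*} {V₂ : Type*} (A₁ : V₁ → V₁ → Prop) (A₂ : V₂ → V₂ → Prop) :
    V₁ × V₂ → V₁ × V₂ → Prop :=
  fun p q => A₁ p.1 q.1 ∧ A₂ p.2 q.2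

/-- Disjoint union of graphs. -/
def DUnion {V₁ : Type*} {V₂ : Type*} (A₁ : V₁ → V₁ → Prop) (A₂ : V₂ → V₂ → Prop) :
    V₁ ⊕ V₂ → V₁ ⊕ V₂ → Prop
  | Sum.inl u, Sum.inl v => A₁ u v
  | Sum.inr u, Sum.inr v => A₂ u v
  | _, _ => False

/-- A graph is composite w.r.t. the direct product if it is isomorphic to a direct
product of graphs each having at least two vertices. -/
def Composite {V : Type*} (A : V → V → Prop) : Prop :=
  ∃ (V₁ V₂ : Type) (A₁ : V₁ → V₁ → Prop) (A₂ : V₂ → V₂ → Prop),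
    Symmetric A₁ ∧ Symmetric A₂ ∧
    2 ≤ Nat.card V₁ ∧ 2 ≤ Nat.card V₂ ∧
    IsIso A (DProd A₁ A₂)

/-- Number of edges (unordered pairs, loops included). -/
noncomputable def numEdges {V : Type*} {A : V → V → Prop} (h : Symmetric A) : ℕ :=
  (Sym2.fromRel (⟨fun _ _ hab => h hab⟩ : Std.Symm A)).ncard

/-- Number of loops. -/
noncomputable def numLoops {V : Type*} (A : V → V → Prop) : ℕ :=
  {u : V | A u u}.ncard

/-- The class 𝒢 of the paper. -/
def InClassG {n : ℕ} {A : Fin n → Fin n → Prop} (h : Symmetric A) : Prop :=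
  Conn A ∧ ¬ Bipartite A ∧ n.Prime ∧
  numLoops A < numEdges h ∧
  ¬ 2 ∣ (2 * numEdges h - numLoops A) ∧
  ¬ 3 ∣ (2 * numEdges h - numLoops A)
/-- `D₂`: the graph on two vertices with a loop at each vertex and no other edge. -/
def D2Adj : Fin 2 → Fin 2 → Prop := fun i j => i = j

/-! ### Auxiliary constructions for `stmt12` -/

/-- 2-vertex factor: loop at `0` plus the edge `0–1` (no loop at `1`). -/
abbrev FAdj : Fin 2 → Fin 2 → Prop := fun i j => i = 0 ∨ j = 0

/-- Path `0-1-2-3` with loops at `0,1,2`:  6 edges, 3 loops. -/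
abbrev B1 : Fin 4 → Fin 4 → Prop :=
  fun b d => (b = d ∧ ¬ b = 3) ∨ b.val + 1 = d.val ∨ d.val + 1 = b.val

/-- `K₄` minus the edge `0–3`, no loops: 5 edges, 0 loops. -/
abbrev B2 : Fin 4 → Fin 4 → Prop :=
  fun b d => ¬ b = d ∧ ¬(b = 0 ∧ d = 3) ∧ ¬(b = 3 ∧ d = 0)

theorem symF : Symmetric FAdj := by unfold Symmetric; decide
theorem symB1 : Symmetric B1 := by unfold Symmetric; decide
theorem symB2 : Symmetric B2 := by unfold Symmetric; decide

theorem hsA1 : Symmetric (DProd FAdj B1) := fun _ _ h => ⟨symF h.1, symB1 h.2⟩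
theorem hsA2 : Symmetric (DProd FAdj B2) := fun _ _ h => ⟨symF h.1, symB2 h.2⟩

instance : DecidableRel (DProd FAdj B1) := fun _ _ => by unfold DProd; infer_instance
instance : DecidableRel (DProd FAdj B2) := fun _ _ => by unfold DProd; infer_instance

instance : DecidableRel (DUnion (DProd FAdj B1) (DProd FAdj B2)) := fun p q =>
  match p, q with
  | Sum.inl a, Sum.inl b => inferInstanceAs (Decidable (DProd FAdj B1 a b))
  | Sum.inr a, Sum.inr b => inferInstanceAs (Decidable (DProd FAdj B2 a b))
  | Sum.inl _, Sum.inr _ => inferInstanceAs (Decidable False)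
  | Sum.inr _, Sum.inl _ => inferInstanceAs (Decidable False)

theorem symB : Symmetric (DUnion B1 B2) := by
  rintro (a | a) (b | b) h
  · exact symB1 h
  · exact h.elim
  · exact h.elim
  · exact symB2 h

/-- connectivity from a root, for symmetric relations -/
theorem conn_of_root {V : Type*} {A : V → V → Prop} (hs : Symmetric A) (r : V)
    (h : ∀ u, Relation.ReflTransGen A u r) : Conn A :=
  fun u v => (h u).trans ((@Relation.ReflTransGen.symmetric _ A ⟨fun _ _ hab => hs hab⟩).symm _ _ (h v))

theorem connA1 : Conn (DProd FAdj B1) := by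
  apply conn_of_root hsA1 (0, 0)
  have h10 : Relation.ReflTransGen (DProd FAdj B1) (0, 1) (0, 0) :=
    .single ⟨by decide, by decide⟩
  have h20 : Relation.ReflTransGen (DProd FAdj B1) (0, 2) (0, 0) :=
    .head ⟨by decide, by decide⟩ h10
  have h30 : Relation.ReflTransGen (DProd FAdj B1) (0, 3) (0, 0) :=
    .head ⟨by decide, by decide⟩ h20
  rintro ⟨i, b⟩
  fin_cases i <;> fin_cases b
  · exact .refl
  · exact h10
  · exact h20
  · exact h30
  · exact .single ⟨by decide, by decide⟩
  · exact .single ⟨by decide, by decide⟩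
  · exact .head ⟨by decide, by decide⟩ h10
  · exact .head ⟨by decide, by decide⟩ h20

theorem connA2 : Conn (DProd FAdj B2) := by
  apply conn_of_root hsA2 (0, 0)
  have h10 : Relation.ReflTransGen (DProd FAdj B2) (0, 1) (0, 0) :=
    .single ⟨by decide, by decide⟩
  rintro ⟨i, b⟩
  fin_cases i <;> fin_cases b
  · exact .refl
  · exact h10
  · exact .single ⟨by decide, by decide⟩
  · exact .head ⟨by decide, by decide⟩ h10
  · exact .head ⟨by decide, by decide⟩ h10
  · exact .single ⟨by decide, by decide⟩
  · exact .single ⟨by decide, by decide⟩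
  · exact .head ⟨by decide, by decide⟩ h10

/-- loop count is an isomorphism invariant -/
theorem isIso_numLoops {V₁ V₂ : Type*} {A₁ : V₁ → V₁ → Prop} {A₂ : V₂ → V₂ → Prop}
    (h : IsIso A₁ A₂) : numLoops A₁ = numLoops A₂ := by
  obtain ⟨e, he⟩ := h
  have himg : e '' {u | A₁ u u} = {v | A₂ v v} := by
    ext v
    constructor
    · rintro ⟨u, hu, rfl⟩
      exact (he u u).mp hu
    · intro hv
      exact ⟨e.symm v, (he _ _).mpr (by simpa using hv), e.apply_symm_apply v⟩
  rw [numLoops, numLoops, ← himg, Set.ncard_image_of_injective _ e.injective]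

def unionEquiv : (Fin 2 × Fin 4) ⊕ (Fin 2 × Fin 4) ≃ Fin 2 × (Fin 4 ⊕ Fin 4) where
  toFun := Sum.elim (fun p => (p.1, Sum.inl p.2)) (fun p => (p.1, Sum.inr p.2))
  invFun := fun q => match q.2 with
    | Sum.inl b => Sum.inl (q.1, b)
    | Sum.inr b => Sum.inr (q.1, b)
  left_inv := by rintro (⟨i, b⟩ | ⟨i, b⟩) <;> rfl
  right_inv := by rintro ⟨i, b | b⟩ <;> rfl

theorem isoUnion :
    IsIso (DUnion (DProd FAdj B1) (DProd FAdj B2)) (DProd FAdj (DUnion B1 B2)) := by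
  refine ⟨unionEquiv, ?_⟩
  rintro (⟨i, b⟩ | ⟨i, b⟩) (⟨j, d⟩ | ⟨j, d⟩) <;>
    simp [DUnion, DProd, unionEquiv]

theorem loops_DUnion :
    numLoops (DUnion (DProd FAdj B1) (DProd FAdj B2)) = 3 := by
  rw [numLoops, Set.ncard_eq_toFinset_card']
  decide

theorem loopsA1 : numLoops (DProd FAdj B1) = 3 := by
  rw [numLoops, Set.ncard_eq_toFinset_card']; decide

theorem loopsA2 : numLoops (DProd FAdj B2) = 0 := by
  rw [numLoops, Set.ncard_eq_toFinset_card']; decide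

/-- There exist connected graphs `H₁`, `H₂` (self-loops allowed) with
the same number of vertices and the same number of edges such that: `H₁ ≇ H₂`; the
disjoint union `H₁ ⊔ H₂` is composite w.r.t. the direct product — indeed `H₁ ⊔ H₂ ≅ F ⊗ B`
for some 2-vertex graph `F` not isomorphic to `D₂` and some graph `B`; and there is no
graph `B'` with `H₁ ⊔ H₂ ≅ D₂ ⊗ B'`. -/
theorem stmt12 :
    ∃ (V₁ V₂ : Type) (A₁ : V₁ → V₁ → Prop) (A₂ : V₂ → V₂ → Prop)
      (hs₁ : Symmetric A₁) (hs₂ : Symmetric A₂),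
      Conn A₁ ∧ Conn A₂ ∧
      Nat.card V₁ = Nat.card V₂ ∧ numEdges hs₁ = numEdges hs₂ ∧
      ¬ IsIso A₁ A₂ ∧
      (∃ (F : Fin 2 → Fin 2 → Prop) (W : Type) (B : W → W → Prop),
        Symmetric F ∧ Symmetric B ∧ 2 ≤ Nat.card W ∧
        ¬ IsIso F D2Adj ∧ IsIso (DUnion A₁ A₂) (DProd F B)) ∧
      Composite (DUnion A₁ A₂) ∧
      ¬ ∃ (W : Type) (B' : W → W → Prop), Symmetric B' ∧
          IsIso (DUnion A₁ A₂) (DProd D2Adj B') := by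
  
  refine ⟨Fin 2 × Fin 4, Fin 2 × Fin 4, DProd FAdj B1, DProd FAdj B2, hsA1, hsA2,
    connA1, connA2, rfl, ?_, ?_, ?_, ?_, ?_⟩
  · -- same number of edges (both have 15)
    rw [numEdges, numEdges, Set.ncard_eq_toFinset_card', Set.ncard_eq_toFinset_card']
    decide
  · -- not isomorphic: 3 loops vs 0 loops
    intro h
    have := isIso_numLoops h
    rw [loopsA1, loopsA2] at this
    exact absurd this (by decide)
  · -- product decomposition with F ≇ D₂
    refine ⟨FAdj, Fin 4 ⊕ Fin 4, DUnion B1 B2, symF, symB, ?_, ?_, isoUnion⟩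
    · simp [Nat.card_eq_fintype_card]
    · rintro ⟨e, he⟩
      have h1 : FAdj 1 1 := (he 1 1).mpr rfl
      exact absurd h1 (by decide)
  · -- composite
    exact ⟨Fin 2, Fin 4 ⊕ Fin 4, FAdj, DUnion B1 B2, symF, symB,
      by simp [Nat.card_eq_fintype_card], by simp [Nat.card_eq_fintype_card], isoUnion⟩
  · -- no D₂ ⊗ B' decomposition: parity of loop count
    rintro ⟨W, B', hB', hiso⟩
    have heq := isIso_numLoops hiso
    have hset : {p : Fin 2 × W | DProd D2Adj B' p p}
        = (Set.univ : Set (Fin 2)) ×ˢ {b : W | B' b b} := by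
      ext ⟨i, b⟩
      simp [DProd, D2Adj]
    have h2 : numLoops (DProd D2Adj B') = 2 * Nat.card {b : W | B' b b} := by
      rw [numLoops, hset, ← Nat.card_coe_set_eq,
        Nat.card_congr (Equiv.Set.prod _ _), Nat.card_prod]
      congr 1
      rw [Nat.card_congr (Equiv.Set.univ _)]
      simp [Nat.card_eq_fintype_card]
    rw [loops_DUnion, h2] at heq
    omega
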